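/- Let P[i..j] be an f-MEM of P with respect to T that contains no complete phrase of PFP(P) and is split across two consecutive phrases PFP(P)[a] and PFP(P)[a+1], exactly one of which occurs at least f times in PFP(T). Then that phrase is the first or last phrase of an f-MEM of PFP(P) with respect to PFP(T), and P[i..j] is contained in the pseudo-MEM corresponding to the phrase sequence in S_1 arising from that f-MEM of the parse. -/

import Mathlib

/-- The substring of `S` at 0-indexed closed positions `[i..j]`. -/
def strSub {α : Type*} (S : List α) (i j : ℕ) : List α := (S.drop i).take (j + 1 - i)

/-- `S` occurs as a contiguous substring of `X` at 0-indexed position `p`. -/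
def occursAt {α : Type*} (S X : List α) (p : ℕ) : Prop :=
  p + S.length ≤ X.length ∧ (X.drop p).take S.length = S

/-- The number of occurrences of `S` as a contiguous substring of `X`. -/
def occCount {α : Type*} [DecidableEq α] (S X : List α) : ℕ :=
  ((Finset.range (X.length + 1)).filter
    (fun p => p + S.length ≤ X.length ∧ (X.drop p).take S.length = S)).card

/-- `P[i..j]` (0-indexed, closed) is an `f`-MEM of `P` with respect to `T`. -/
def IsMEM {α : Type*} [DecidableEq α] (f : ℕ) (P T : List α) (i j : ℕ) : Prop :=
  i ≤ j ∧ j < P.length ∧ f ≤ occCount (strSub P i j) T ∧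
  (i = 0 ∨ occCount (strSub P (i - 1) j) T < f) ∧
  (j + 1 = P.length ∨ occCount (strSub P i (j + 1)) T < f)

/-- The trigger positions of `S` under window width `w` and trigger predicate `h`:
positions `q` with `w ≤ q ≤ |S|` such that `h` holds of the `w` characters ending at
(1-indexed) position `q`. -/
def pfpTriggers {α : Type*} (w : ℕ) (h : List α → Bool) (S : List α) : List ℕ :=
  (List.range (S.length + 1)).filter (fun q => decide (w ≤ q) && h ((S.drop (q - w)).take w))

/-- 0-indexed starting positions of the phrases of the prefix-free parse of `S`. -/
def pfpStarts {α : Type*} (w : ℕ) (h : List α → Bool) (S : List α) : List ℕ :=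
  0 :: (pfpTriggers w h S).map (fun q => q - w)

/-- Exclusive ending positions of the phrases of the prefix-free parse of `S`. -/
def pfpEnds {α : Type*} (w : ℕ) (h : List α → Bool) (S : List α) : List ℕ :=
  pfpTriggers w h S ++ [S.length]

/-- The prefix-free parse of `S`, as the list of its phrases. -/
def PFP {α : Type*} (w : ℕ) (h : List α → Bool) (S : List α) : List (List α) :=
  ((pfpStarts w h S).zip (pfpEnds w h S)).map (fun se => (S.drop se.1).take (se.2 - se.1))

/-- The starting position in `S` of phrase `i` (0-indexed) of `PFP(S)`. -/
def pfpStart {α : Type*} (w : ℕ) (h : List α → Bool) (S : List α) (i : ℕ) : ℕ :=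
  (pfpStarts w h S).getD i 0

/-- The exclusive ending position in `S` of phrase `j` (0-indexed) of `PFP(S)`. -/
def pfpEnd {α : Type*} (w : ℕ) (h : List α → Bool) (S : List α) (j : ℕ) : ℕ :=
  (pfpEnds w h S).getD j 0

/-- The substring of `S` that becomes the phrase sequence `PFP(S)[i..j]` (0-indexed):
from the first character of phrase `i` to the last character of phrase `j`. -/
def pfpBecomes {α : Type*} (w : ℕ) (h : List α → Bool) (S : List α) (i j : ℕ) : List α :=
  (S.drop (pfpStart w h S i)).take (pfpEnd w h S j - pfpStart w h S i)

/-- The pair `(l, r)` of 0-indexed phrase positions delimits a phrase sequence in `S₁`: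
`PFP(P)[l..r]` is obtained from an `f`-MEM `PFP(P)[i..j]` of `PFP(P)` with respect to
`PFP(T)` by extending one phrase in each direction where possible. -/
def inS1 {α : Type*} [DecidableEq α] (w f : ℕ) (h : List α → Bool) (P T : List α)
    (l r : ℕ) : Prop :=
  ∃ i j, IsMEM f (PFP w h P) (PFP w h T) i j ∧
    l = i - 1 ∧ r = min (j + 1) ((PFP w h P).length - 1)

/-- The pair `(l, r)` of 0-indexed phrase positions delimits a phrase sequence in `S₂`:
`r = l + 1` and neither phrase `PFP(P)[l]` nor phrase `PFP(P)[l+1]` occurs in `PFP(T)`. -/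
def inS2 {α : Type*} [DecidableEq α] (w : ℕ) (h : List α → Bool) (P T : List α)
    (l r : ℕ) : Prop :=
  r = l + 1 ∧ l + 1 < (PFP w h P).length ∧
  (PFP w h P).getD l [] ∉ PFP w h T ∧ (PFP w h P).getD (l + 1) [] ∉ PFP w h T


set_option linter.unusedSectionVars false
section Aux

variable {α : Type*} [DecidableEq α]

private lemma take_eq_of_take_append (l u v : List α)
    (hl : l.take (u.length + v.length) = u ++ v) : l.take u.length = u := by
  have h := congrArg (List.take u.length) hl
  rwa [List.take_take, min_eq_left (Nat.le_add_right _ _), List.take_left] at h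

private lemma drop_take_eq_of_take_append (l u v : List α)
    (hl : l.take (u.length + v.length) = u ++ v) :
    (l.drop u.length).take v.length = v := by
  have h := congrArg (List.drop u.length) hl
  rwa [List.drop_take, Nat.add_sub_cancel_left, List.drop_left] at h

private lemma occCount_append_le_left (u v X : List α) :
    occCount (u ++ v) X ≤ occCount u X := by
  unfold occCount
  apply Finset.card_le_card
  intro p hp
  simp only [Finset.mem_filter, Finset.mem_range, List.length_append] at *
  obtain ⟨h1, h2, h3⟩ := hp
  exact ⟨h1, by omega, take_eq_of_take_append _ _ _ h3⟩

private lemma occCount_append_le_right (u v X : List α) :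
    occCount (u ++ v) X ≤ occCount v X := by
  unfold occCount
  apply Finset.card_le_card_of_injOn (fun p => p + u.length)
  · intro p hp
    simp only [Finset.coe_filter, Set.mem_setOf_eq, Finset.mem_filter,
      Finset.mem_range, List.length_append] at *
    obtain ⟨h1, h2, h3⟩ := hp
    have h4 := drop_take_eq_of_take_append _ _ _ h3
    rw [List.drop_drop] at h4
    exact ⟨by omega, by omega, h4⟩
  · intro a _ b _ hab
    simpa using hab

private lemma strSub_split (Q : List α) (i k j : ℕ) (h1 : i ≤ k) (h2 : k ≤ j) :
    strSub Q i j = strSub Q i k ++ strSub Q (k + 1) j := by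
  unfold strSub
  rw [show j + 1 - i = (k + 1 - i) + (j - k) by omega, List.take_add, List.drop_drop,
    show i + (k + 1 - i) = k + 1 by omega, show j - k = j + 1 - (k + 1) by omega]

private lemma strSub_single {β : Type*} (Q : List β) (d : β) (c : ℕ) (hc : c < Q.length) :
    strSub Q c c = [Q.getD c d] := by
  unfold strSub
  rw [List.drop_eq_getElem_cons hc, show c + 1 - c = 1 by omega,
    List.getD_eq_getElem _ _ hc]
  rfl

private lemma getD_mono (l : List ℕ) (hl : l.Pairwise (· ≤ ·)) {k m : ℕ} (hkm : k ≤ m)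
    (hm : m < l.length) : l.getD k 0 ≤ l.getD m 0 := by
  rcases eq_or_lt_of_le hkm with rfl | hlt
  · exact le_refl _
  · rw [List.getD_eq_getElem _ _ (lt_trans hlt hm), List.getD_eq_getElem _ _ hm]
    exact List.pairwise_iff_getElem.mp hl k m (lt_trans hlt hm) hm hlt

private lemma pfpTriggers_pairwise (w : ℕ) (h : List α → Bool) (S : List α) :
    (pfpTriggers w h S).Pairwise (· < ·) :=
  List.pairwise_lt_range.filter _

private lemma pfpTriggers_le_length (w : ℕ) (h : List α → Bool) (S : List α)
    {q : ℕ} (hq : q ∈ pfpTriggers w h S) : q ≤ S.length := by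
  unfold pfpTriggers at hq
  have := List.mem_range.mp (List.mem_of_mem_filter hq)
  omega

private lemma pfpStarts_pairwise (w : ℕ) (h : List α → Bool) (S : List α) :
    (pfpStarts w h S).Pairwise (· ≤ ·) := by
  unfold pfpStarts
  refine List.Pairwise.cons (fun x _ => Nat.zero_le x) ?_
  exact (pfpTriggers_pairwise w h S).map _ (fun a b hab => by omega)

private lemma pfpEnds_pairwise (w : ℕ) (h : List α → Bool) (S : List α) :
    (pfpEnds w h S).Pairwise (· ≤ ·) := by
  unfold pfpEnds
  rw [List.pairwise_append]
  refine ⟨(pfpTriggers_pairwise w h S).imp (fun hab => le_of_lt hab), ?_, ?_⟩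
  · simp
  · intro a ha b hb
    simp only [List.mem_singleton] at hb
    subst hb
    exact pfpTriggers_le_length w h S ha

private lemma pfpStarts_length (w : ℕ) (h : List α → Bool) (S : List α) :
    (pfpStarts w h S).length = (PFP w h S).length := by
  simp [PFP, pfpStarts, pfpEnds]

private lemma pfpEnds_length (w : ℕ) (h : List α → Bool) (S : List α) :
    (pfpEnds w h S).length = (PFP w h S).length := by
  simp [PFP, pfpStarts, pfpEnds]

end Aux

/-- Let `P[i..j]` (0-indexed) be an `f`-MEM of `P` with respect to `T`
that contains no complete phrase of `PFP(P)` and is split across two consecutive phrases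
`PFP(P)[a]` and `PFP(P)[a+1]`, exactly one of which occurs at least `f` times in
`PFP(T)`. Then that phrase is the first or last phrase of an `f`-MEM of `PFP(P)` with
respect to `PFP(T)`, and `P[i..j]` is contained in the pseudo-MEM corresponding to the
phrase sequence in `S₁` arising from that `f`-MEM of the parse. -/
theorem split_two_phrases_one_frequent {α : Type*} [DecidableEq α] (w f : ℕ) (hw : 1 ≤ w)
    (hf : 1 ≤ f) (h : List α → Bool) (P T : List α)
    (hN : 2 ≤ (PFP w h P).length)
    (i j a : ℕ) (hmem : IsMEM f P T i j) (ha : a + 1 < (PFP w h P).length)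
    (hsplit1 : pfpStart w h P a ≤ i) (hsplit2 : i < pfpEnd w h P a)
    (hsplit3 : pfpEnd w h P a ≤ j) (hsplit4 : j < pfpEnd w h P (a + 1))
    (hnophrase : ∀ c, c < (PFP w h P).length →
      ¬ (i ≤ pfpStart w h P c ∧ pfpEnd w h P c ≤ j + 1))
    (hxor : Xor' (f ≤ occCount [(PFP w h P).getD a []] (PFP w h T))
                 (f ≤ occCount [(PFP w h P).getD (a + 1) []] (PFP w h T))) :
    ∃ c, (c = a ∨ c = a + 1) ∧ f ≤ occCount [(PFP w h P).getD c []] (PFP w h T) ∧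
      ∃ i' j', IsMEM f (PFP w h P) (PFP w h T) i' j' ∧ (i' = c ∨ j' = c) ∧
        pfpStart w h P (i' - 1) ≤ i ∧
        j + 1 ≤ pfpEnd w h P (min (j' + 1) ((PFP w h P).length - 1)) := by
  set Q := PFP w h P with hQ
  set T' := PFP w h T with hT'
  set N := Q.length with hNdef
  have haN : a < N := by omega
  rcases hxor with ⟨hA, hB⟩ | ⟨hB, hA⟩
  · -- phrase a is frequent, phrase a+1 is not
    set pred : ℕ → Prop := fun k => f ≤ occCount (strSub Q (a - k) a) T' with hpred
    have hP0 : pred 0 := by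
      simp only [hpred, Nat.sub_zero]
      rw [strSub_single Q ([] : List α) a haN]
      exact hA
    set K := Nat.findGreatest pred a with hKdef
    have hK : pred K := Nat.findGreatest_spec (Nat.zero_le a) hP0
    have hKa : K ≤ a := Nat.findGreatest_le a
    refine ⟨a, Or.inl rfl, hA, a - K, a, ?_, Or.inr rfl, ?_, ?_⟩
    · refine ⟨by omega, haN, hK, ?_, ?_⟩
      · by_cases hz : a - K = 0
        · exact Or.inl hz
        · refine Or.inr ?_
          have hKlt : K + 1 ≤ a := by omega
          have hng := Nat.findGreatest_is_greatest (P := pred)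
            (Nat.lt_succ_self K) hKlt
          rw [show a - K - 1 = a - (K + 1) by omega]
          exact lt_of_not_ge hng
      · refine Or.inr ?_
        rw [strSub_split Q (a - K) a (a + 1) (by omega) (by omega)]
        calc occCount (strSub Q (a - K) a ++ strSub Q (a + 1) (a + 1)) T'
            ≤ occCount (strSub Q (a + 1) (a + 1)) T' :=
              occCount_append_le_right _ _ _
          _ < f := by
              rw [strSub_single Q ([] : List α) (a + 1) (by omega)]
              exact lt_of_not_ge hB
    · have hlen : a < (pfpStarts w h P).length := by
        rw [pfpStarts_length]; exact haN
      have := getD_mono (pfpStarts w h P) (pfpStarts_pairwise w h P)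
        (show a - K - 1 ≤ a by omega) hlen
      exact le_trans this hsplit1
    · rw [min_eq_left (by omega : a + 1 ≤ N - 1)]
      omega
  · -- phrase a+1 is frequent, phrase a is not
    set pred : ℕ → Prop := fun k => f ≤ occCount (strSub Q (a + 1) (a + 1 + k)) T' with hpred
    have hP0 : pred 0 := by
      simp only [hpred, Nat.add_zero]
      rw [strSub_single Q ([] : List α) (a + 1) ha]
      exact hB
    set K := Nat.findGreatest pred (N - a - 2) with hKdef
    have hK : pred K := Nat.findGreatest_spec (Nat.zero_le _) hP0
    have hKle : K ≤ N - a - 2 := Nat.findGreatest_le _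
    refine ⟨a + 1, Or.inr rfl, hB, a + 1, a + 1 + K, ?_, Or.inl rfl, ?_, ?_⟩
    · refine ⟨by omega, by omega, hK, ?_, ?_⟩
      · refine Or.inr ?_
        rw [show a + 1 - 1 = a by omega,
          strSub_split Q a a (a + 1 + K) (le_refl a) (by omega)]
        calc occCount (strSub Q a a ++ strSub Q (a + 1) (a + 1 + K)) T'
            ≤ occCount (strSub Q a a) T' := occCount_append_le_left _ _ _
          _ < f := by
              rw [strSub_single Q ([] : List α) a haN]
              exact lt_of_not_ge hA
      · by_cases hj : a + 1 + K + 1 = N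
        · exact Or.inl hj
        · refine Or.inr ?_
          have hng := Nat.findGreatest_is_greatest (P := pred)
            (Nat.lt_succ_self K) (show K + 1 ≤ N - a - 2 by omega)
          rw [show a + 1 + K + 1 = a + 1 + (K + 1) by omega]
          exact lt_of_not_ge hng
    · rw [show a + 1 - 1 = a by omega]
      exact hsplit1
    · have hlen : min (a + 1 + K + 1) (N - 1) < (pfpEnds w h P).length := by
        rw [pfpEnds_length, ← hQ, ← hNdef]; omega
      have h2 : pfpEnd w h P (a + 1) ≤ pfpEnd w h P (min (a + 1 + K + 1) (N - 1)) :=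
        getD_mono (pfpEnds w h P) (pfpEnds_pairwise w h P)
          (show a + 1 ≤ min (a + 1 + K + 1) (N - 1) by omega) hlen
      omega
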